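/- Let G be a finite simple graph with m edges and arboricity at most α (the edge set of G partitions into at most α forests), where α ≥ 1 is an integer. Then Σ_{{u,v} ∈ E(G)} min(deg(u), deg(v)) ≤ 2·α·m, where the sum is over the edges of G and deg denotes degree in G. -/

import Mathlib

open Classical Finset

/-- A graph `G` has arboricity at most `a` if its edge set can be partitioned into
at most `a` forests, i.e. there are `a` acyclic subgraphs of `G` with pairwise disjoint
edge sets whose union covers every edge of `G`. -/
def HasArboricityLE {V : Type*} (G : SimpleGraph V) (a : ℕ) : Prop :=
  ∃ F : Fin a → SimpleGraph V,
    (∀ i, (F i).IsAcyclic) ∧ (∀ i, F i ≤ G) ∧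
    (Pairwise fun i j => Disjoint (F i).edgeSet (F j).edgeSet) ∧
    ∀ e ∈ G.edgeSet, ∃ i, e ∈ (F i).edgeSet


/-- An acyclic graph with an edge has a leaf: a vertex with a unique neighbor. -/
lemma exists_leaf {V : Type*} [Fintype V] [DecidableEq V] (F : SimpleGraph V)
    (hF : F.IsAcyclic) {u₀ x₀ : V} (h0 : F.Adj u₀ x₀) :
    ∃ u x, F.Adj u x ∧ ∀ w, F.Adj u w → w = x := by
  classical
  set P : ℕ → Prop := fun n => ∃ (u v : V) (p : F.Walk u v), p.IsPath ∧ p.length = n with hP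
  have hP1 : P 1 := ⟨u₀, x₀, SimpleGraph.Walk.cons h0 SimpleGraph.Walk.nil, by
    simp [SimpleGraph.Walk.isPath_def, h0.ne], by simp⟩
  have hcard : 1 ≤ Fintype.card V := Fintype.card_pos_iff.mpr ⟨u₀⟩
  set N := Nat.findGreatest P (Fintype.card V) with hN
  have hPN : P N := Nat.findGreatest_spec hcard hP1
  have hN1 : 1 ≤ N := Nat.le_findGreatest hcard hP1
  obtain ⟨u, v, p, hp, hlen⟩ := hPN
  cases p with
  | nil => simp at hlen; omega
  | cons h q =>
    rename_i b
    refine ⟨u, b, h, fun w hw => ?_⟩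
    by_contra hne
    by_cases hsup : w ∈ (SimpleGraph.Walk.cons h q).support
    · -- get a cycle
      set q' := (SimpleGraph.Walk.cons h q).takeUntil w hsup with hq'
      have hq'path : q'.IsPath := hp.takeUntil hsup
      have hcyc := hF (SimpleGraph.Walk.cons hw.symm q')
      rw [SimpleGraph.Walk.cons_isCycle_iff] at hcyc
      push_neg at hcyc
      have hmem : s(w, u) ∈ q'.edges := hcyc hq'path
      have hmem' : s(u, w) ∈ (SimpleGraph.Walk.cons h q).edges := by
        have := (SimpleGraph.Walk.cons h q).edges_takeUntil_subset hsup hmem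
        rwa [Sym2.eq_swap] at this
      rw [SimpleGraph.Walk.edges_cons, List.mem_cons] at hmem'
      rcases hmem' with h1 | h2
      · exact hne (Sym2.congr_right.mp h1)
      · have : u ∈ q.support := SimpleGraph.Walk.fst_mem_support_of_mem_edges q h2
        rw [SimpleGraph.Walk.cons_isPath_iff] at hp
        exact hp.2 this
    · -- extend the path
      have hp' : (SimpleGraph.Walk.cons hw.symm (SimpleGraph.Walk.cons h q)).IsPath :=
        hp.cons hsup
      have hlt : (SimpleGraph.Walk.cons hw.symm (SimpleGraph.Walk.cons h q)).length
          < Fintype.card V := hp'.length_lt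
      have hPN1 : P (N + 1) := ⟨w, v, _, hp', by simp [hlen]⟩
      exact Nat.findGreatest_is_greatest (lt_add_one N)
        (by simpa [hlen] using hlt.le) hPN1


/-- For an acyclic graph one can injectively assign to each edge one of its endpoints. -/
lemma forest_exists_injOn {V : Type*} [Fintype V] [DecidableEq V] :
    ∀ (n : ℕ) (F : SimpleGraph V) [Fintype F.edgeSet], F.IsAcyclic →
      F.edgeFinset.card = n →
      ∃ f : Sym2 V → V, Set.InjOn f ↑F.edgeFinset ∧ ∀ e ∈ F.edgeFinset, f e ∈ e := by
  intro n
  induction n using Nat.strong_induction_on with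
  | _ n ih =>
    intro F _ hF hcard
    classical
    rcases F.edgeFinset.eq_empty_or_nonempty with hemp | ⟨e₀, he₀⟩
    · exact ⟨fun e => (Quot.out e).1, by simp [hemp], by simp [hemp]⟩
    · -- find a leaf
      obtain ⟨u₀, x₀, hadj0⟩ : ∃ u x, F.Adj u x := by
        induction e₀ using Sym2.ind with
        | _ a b => exact ⟨a, b, SimpleGraph.mem_edgeFinset.mp he₀⟩
      obtain ⟨u, x, hux, huniq⟩ := exists_leaf F hF hadj0
      set e₁ : Sym2 V := s(u, x) with he₁def
      have he₁ : e₁ ∈ F.edgeFinset := SimpleGraph.mem_edgeFinset.mpr hux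
      set F' := F.deleteEdges {e₁} with hF'def
      have hle : F' ≤ F := F.deleteEdges_le _
      have hF'ac : F'.IsAcyclic := fun v c hc => hF (c.mapLe hle) (hc.mapLe hle)
      have hF'fin : Fintype F'.edgeSet := Fintype.ofFinite _
      have hF'edge : F'.edgeFinset = F.edgeFinset.erase e₁ := by
        ext e
        simp only [SimpleGraph.mem_edgeFinset, mem_erase, hF'def,
          SimpleGraph.edgeSet_deleteEdges, Set.mem_diff, Set.mem_singleton_iff]
        tauto
      have hcard' : F'.edgeFinset.card = n - 1 := by
        rw [hF'edge, card_erase_of_mem he₁, hcard]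
      have hn1 : n - 1 < n := by
        have : 0 < n := hcard ▸ card_pos.mpr ⟨e₁, he₁⟩
        omega
      obtain ⟨f', hinj', hmem'⟩ := ih (n - 1) hn1 F' hF'ac hcard'
      -- u is not an endpoint of any edge of F'
      have hu_not : ∀ e ∈ F'.edgeFinset, u ∉ e := by
        intro e he hue
        induction e using Sym2.ind with
        | _ a b =>
          have hadj : F'.Adj a b := SimpleGraph.mem_edgeFinset.mp he
          rw [Sym2.mem_iff] at hue
          have : F'.Adj u u ∨ F'.Adj u b ∨ F'.Adj u a := by
            rcases hue with rfl | rfl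
            · exact Or.inr (Or.inl hadj)
            · exact Or.inr (Or.inr hadj.symm)
          have key : ∀ y, ¬ F'.Adj u y := by
            intro y hy
            rw [hF'def, SimpleGraph.deleteEdges_adj] at hy
            exact hy.2 (by rw [huniq y hy.1, he₁def]; rfl)
          rcases this with h | h | h
          · exact key u h
          · exact key b h
          · exact key a h
      refine ⟨fun e => if e = e₁ then u else f' e, ?_, ?_⟩
      · intro a ha b hb hab
        simp only [Finset.coe_sort_coe, mem_coe] at ha hb
        dsimp only at hab
        split_ifs at hab with h1 h2 h2
        · rw [h1, h2]
        · have hb' : b ∈ F'.edgeFinset := by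
            rw [hF'edge]; exact mem_erase.mpr ⟨h2, hb⟩
          exact absurd (hab ▸ hmem' b hb') (hu_not b hb')
        · have ha' : a ∈ F'.edgeFinset := by
            rw [hF'edge]; exact mem_erase.mpr ⟨h1, ha⟩
          exact absurd (hab ▸ hmem' a ha') (hu_not a ha')
        · have ha' : a ∈ F'.edgeFinset := by
            rw [hF'edge]; exact mem_erase.mpr ⟨h1, ha⟩
          have hb' : b ∈ F'.edgeFinset := by
            rw [hF'edge]; exact mem_erase.mpr ⟨h2, hb⟩
          exact hinj' (by simpa using ha') (by simpa using hb') hab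
      · intro e he
        by_cases h1 : e = e₁
        · simp [h1, he₁def]
        · have he' : e ∈ F'.edgeFinset := by
            rw [hF'edge]; exact mem_erase.mpr ⟨h1, he⟩
          simpa [h1] using hmem' e he'

/-- (Chiba–Nishizeki.)  If `G` has `m` edges and arboricity at most `a ≥ 1`, then
`Σ_{{u,v} ∈ E(G)} min(deg(u), deg(v)) ≤ 2·a·m`. -/
theorem sum_min_degree_le {V : Type*} [Fintype V] [DecidableEq V]
    (G : SimpleGraph V) [DecidableRel G.Adj] (a : ℕ) (ha : 1 ≤ a)
    (hG : HasArboricityLE G a) :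
    ∑ e ∈ G.edgeFinset,
        Sym2.lift ⟨fun u w => min (G.degree u) (G.degree w), fun u w => min_comm _ _⟩ e
      ≤ 2 * a * G.edgeFinset.card := by
  classical
  obtain ⟨F, hac, hle, hdisj, hcover⟩ := hG
  haveI : ∀ i, Fintype (F i).edgeSet := fun i => Fintype.ofFinite _
  choose f hinj hmem using fun i => forest_exists_injOn (F i).edgeFinset.card (F i) (hac i) rfl
  have idx : ∀ e ∈ G.edgeFinset, ∃ i, e ∈ (F i).edgeFinset := by
    intro e he
    obtain ⟨i, hi⟩ := hcover e (SimpleGraph.mem_edgeFinset.mp he)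
    exact ⟨i, SimpleGraph.mem_edgeFinset.mpr hi⟩
  choose idxf hidxf using idx
  have ha0 : (0 : ℕ) < a := ha
  obtain ⟨g, hgdef⟩ : ∃ g : Sym2 V → Fin a × V,
      ∀ e (he : e ∈ G.edgeFinset), g e = (idxf e he, f (idxf e he) e) :=
    ⟨fun e => if he : e ∈ G.edgeFinset then (idxf e he, f (idxf e he) e)
      else (⟨0, ha0⟩, (Quot.out e).1), fun e he => dif_pos he⟩
  have step1 : ∑ e ∈ G.edgeFinset,
      Sym2.lift ⟨fun u w => min (G.degree u) (G.degree w), fun u w => min_comm _ _⟩ e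
      ≤ ∑ e ∈ G.edgeFinset, G.degree (g e).2 := by
    refine Finset.sum_le_sum fun e he => ?_
    rw [hgdef e he]
    have hm : f (idxf e he) e ∈ e := hmem _ _ (hidxf e he)
    have key : ∀ y, y ∈ e →
        Sym2.lift ⟨fun u w => min (G.degree u) (G.degree w), fun u w => min_comm _ _⟩ e
          ≤ G.degree y := by
      intro y hy
      obtain ⟨w, rfl⟩ := (Sym2.mem_iff_exists).mp hy
      rw [Sym2.lift_mk]
      exact min_le_left _ _
    exact key _ hm
  have hginj : ∀ e₁ ∈ G.edgeFinset, ∀ e₂ ∈ G.edgeFinset, g e₁ = g e₂ → e₁ = e₂ := by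
    intro e₁ h₁ e₂ h₂ heq
    rw [hgdef e₁ h₁, hgdef e₂ h₂, Prod.mk.injEq] at heq
    obtain ⟨hi, hv⟩ := heq
    rw [hi] at hv
    have m1 : e₁ ∈ (F (idxf e₂ h₂)).edgeFinset := hi ▸ hidxf e₁ h₁
    have m2 : e₂ ∈ (F (idxf e₂ h₂)).edgeFinset := hidxf e₂ h₂
    exact hinj (idxf e₂ h₂) (Finset.mem_coe.mpr m1) (Finset.mem_coe.mpr m2) hv
  have step2 : ∑ e ∈ G.edgeFinset, G.degree (g e).2
      = ∑ p ∈ G.edgeFinset.image g, G.degree p.2 :=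
    by rw [Finset.sum_image hginj]
  have step3 : ∑ p ∈ G.edgeFinset.image g, G.degree p.2
      ≤ ∑ p : Fin a × V, G.degree p.2 :=
    Finset.sum_le_sum_of_subset (Finset.subset_univ _)
  have step4 : ∑ p : Fin a × V, G.degree p.2 = 2 * a * G.edgeFinset.card := by
    rw [Fintype.sum_prod_type]
    simp only [Finset.sum_const, Finset.card_univ, Fintype.card_fin]
    simp [SimpleGraph.sum_degrees_eq_twice_card_edges]
    ring
  omega
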